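/- Let A be a bimonoid in a braided monoidal category C, with multiplication m : A ⊗ A ⟶ A, unit u : I ⟶ A, comultiplication d : A ⟶ A ⊗ A and counit e : A ⟶ I. Then t := (d ⊗ 1_A) ≫ (1_A ⊗ m) : A ⊗ A ⟶ A ⊗ A together with e is a counital fusion morphism, i.e. t satisfies the fusion equation (1_A ⊗ t) ≫ (b_{A,A} ⊗ 1_A) ≫ (1_A ⊗ t) ≫ (b_{A,A}⁻¹ ⊗ 1_A) ≫ (t ⊗ 1_A) = (t ⊗ 1_A) ≫ (1_A ⊗ t) and the counitality condition t ≫ (1_A ⊗ e) = 1_A ⊗ e. -/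

import Mathlib

open CategoryTheory Category MonoidalCategory

universe v u

variable {C : Type u} [Category.{v} C] [MonoidalCategory C] [BraidedCategory C]

/-- The fusion equation for `t : A ⊗ A ⟶ A ⊗ A` in a braided monoidal category,
with all coherence isomorphisms made explicit (domain `A ⊗ (A ⊗ A)`). -/
def FusionEq (A : C) (t : A ⊗ A ⟶ A ⊗ A) : Prop :=
  (A ◁ t) ≫ (α_ A A A).inv ≫ ((β_ A A).hom ▷ A) ≫ (α_ A A A).hom ≫ (A ◁ t) ≫
      (α_ A A A).inv ≫ ((β_ A A).inv ▷ A) ≫ (t ▷ A) ≫ (α_ A A A).hom =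
    (α_ A A A).inv ≫ (t ▷ A) ≫ (α_ A A A).hom ≫ (A ◁ t)

/-- The counitality condition `t ≫ (1 ⊗ e) = 1 ⊗ e`. -/
def Counital (A : C) (t : A ⊗ A ⟶ A ⊗ A) (e : A ⟶ 𝟙_ C) : Prop :=
  t ≫ (A ◁ e) = A ◁ e

/-- If `A` is a bimonoid in a braided monoidal category (monoid `(m, u)`, comonoid
`(d, e)`, with `d` and `e` monoid morphisms, the monoid structure on `A ⊗ A` using
the braiding), then `t := (d ⊗ 1) ≫ (1 ⊗ m)` is a counital fusion morphism with
counit `e`. -/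
theorem bimonoid_counitalFusion (A : C)
    (m : A ⊗ A ⟶ A) (u : 𝟙_ C ⟶ A) (d : A ⟶ A ⊗ A) (e : A ⟶ 𝟙_ C)
    -- monoid axioms
    (mul_assoc : (m ▷ A) ≫ m = (α_ A A A).hom ≫ (A ◁ m) ≫ m)
    (one_mul : (u ▷ A) ≫ m = (λ_ A).hom)
    (mul_one : (A ◁ u) ≫ m = (ρ_ A).hom)
    -- comonoid axioms
    (comul_assoc : d ≫ (A ◁ d) = d ≫ (d ▷ A) ≫ (α_ A A A).hom)
    (counit_comul : d ≫ (e ▷ A) = (λ_ A).inv)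
    (comul_counit : d ≫ (A ◁ e) = (ρ_ A).inv)
    -- `d` and `e` are monoid morphisms (bimonoid compatibility)
    (mul_comul : m ≫ d =
      (d ⊗ₘ d) ≫ (α_ A A (A ⊗ A)).hom ≫ (A ◁ (α_ A A A).inv) ≫
        (A ◁ ((β_ A A).hom ▷ A)) ≫ (A ◁ (α_ A A A).hom) ≫
        (α_ A A (A ⊗ A)).inv ≫ (m ⊗ₘ m))
    (mul_counit : m ≫ e = (e ⊗ₘ e) ≫ (λ_ (𝟙_ C)).hom)
    (one_comul : u ≫ d = (λ_ (𝟙_ C)).inv ≫ (u ⊗ₘ u))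
    (one_counit : u ≫ e = 𝟙 (𝟙_ C)) :
    FusionEq A ((d ▷ A) ≫ (α_ A A A).hom ≫ (A ◁ m)) ∧
      Counital A ((d ▷ A) ≫ (α_ A A A).hom ≫ (A ◁ m)) e := by
  refine ⟨?_, ?_⟩
  · unfold FusionEq
    conv_rhs => rw [comp_whiskerRight, comp_whiskerRight, assoc, assoc,
      MonoidalCategory.whiskerLeft_comp, MonoidalCategory.whiskerLeft_comp,
      MonoidalCategory.associator_naturality_middle_assoc,
      ← MonoidalCategory.whiskerLeft_comp_assoc (f := m ▷ A) (g := d ▷ A),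
      ← comp_whiskerRight, mul_comul]
    simp only [comp_whiskerRight, MonoidalCategory.whiskerLeft_comp, assoc]
    slice_lhs 6 7 => rw [← MonoidalCategory.associator_naturality_middle]
    slice_lhs 5 6 => rw [← comp_whiskerRight, ← BraidedCategory.braiding_naturality_left,
      comp_whiskerRight]
    rw [BraidedCategory.braiding_tensor_left_hom]
    simp only [comp_whiskerRight, MonoidalCategory.whiskerLeft_comp, assoc]
    slice_lhs 13 14 => rw [MonoidalCategory.associator_inv_naturality_right]
    slice_lhs 14 15 => rw [whisker_exchange]
    rw [whiskerRight_tensor]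
    simp only [assoc]
    have run0 : (α_ A A A).hom ▷ A ≫ (α_ A (A ⊗ A) A).hom ≫ A ◁ (α_ A A A).hom ≫
        (α_ A A (A ⊗ A)).inv ≫ (α_ (A ⊗ A) A A).inv = 𝟙 (((A ⊗ A) ⊗ A) ⊗ A) := by monoidal
    slice_lhs 10 14 => rw [run0]
    simp only [id_comp, comp_id, assoc]
    slice_lhs 9 10 => rw [← comp_whiskerRight, ← comp_whiskerRight, Iso.hom_inv_id,
      id_whiskerRight, id_whiskerRight]
    simp only [id_comp, comp_id, assoc]
    simp [whisker_exchange]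
    slice_lhs 11 12 => rw [← MonoidalCategory.associator_inv_naturality_left]
    slice_lhs 10 11 => rw [whisker_exchange]
    slice_lhs 9 10 => rw [whisker_exchange]
    slice_lhs 8 9 => rw [whisker_exchange]
    slice_lhs 7 8 => rw [← MonoidalCategory.associator_naturality_left]
    slice_lhs 6 7 => rw [← comp_whiskerRight, ← MonoidalCategory.associator_naturality_left,
      comp_whiskerRight]
    slice_lhs 5 6 => rw [← comp_whiskerRight, ← comp_whiskerRight]
    have comul_assoc' : d ≫ d ▷ A = d ≫ (A ◁ d) ≫ (α_ A A A).inv := by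
      rw [← cancel_mono (α_ A A A).hom]; simp [comul_assoc]
    rw [comul_assoc']
    simp only [comp_whiskerRight, MonoidalCategory.whiskerLeft_comp, assoc]
    slice_rhs 5 5 => rw [MonoidalCategory.tensorHom_def]
    simp only [comp_whiskerRight, MonoidalCategory.whiskerLeft_comp, assoc]
    slice_rhs 5 6 => rw [← MonoidalCategory.whiskerLeft_comp, ← comp_whiskerRight,
      ← whisker_exchange, comp_whiskerRight, MonoidalCategory.whiskerLeft_comp]
    slice_rhs 4 5 => rw [← MonoidalCategory.associator_naturality_middle]
    slice_rhs 3 4 => rw [← comp_whiskerRight, ← MonoidalCategory.associator_naturality_right,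
      comp_whiskerRight]
    slice_rhs 2 3 => rw [← comp_whiskerRight, ← whisker_exchange, comp_whiskerRight]
    slice_rhs 1 2 => rw [← MonoidalCategory.associator_inv_naturality_middle]
    slice_rhs 14 14 => rw [MonoidalCategory.tensorHom_def]
    simp only [comp_whiskerRight, MonoidalCategory.whiskerLeft_comp, assoc]
    slice_rhs 15 16 => rw [← MonoidalCategory.whiskerLeft_comp,
      MonoidalCategory.associator_naturality_middle, MonoidalCategory.whiskerLeft_comp]
    slice_rhs 16 17 => rw [← MonoidalCategory.whiskerLeft_comp,
      ← MonoidalCategory.whiskerLeft_comp, mul_assoc]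
    simp only [comp_whiskerRight, MonoidalCategory.whiskerLeft_comp, assoc]
    slice_rhs 14 15 => rw [← MonoidalCategory.whiskerLeft_comp,
      MonoidalCategory.associator_naturality_left, MonoidalCategory.whiskerLeft_comp]
    slice_rhs 15 16 => rw [← MonoidalCategory.whiskerLeft_comp, ← whisker_exchange,
      MonoidalCategory.whiskerLeft_comp]
    slice_rhs 16 17 => rw [← MonoidalCategory.whiskerLeft_comp, ← whisker_exchange,
      MonoidalCategory.whiskerLeft_comp]
    slice_rhs 17 18 => rw [← MonoidalCategory.whiskerLeft_comp, ← whisker_exchange,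
      MonoidalCategory.whiskerLeft_comp]
    slice_lhs 3 4 => rw [MonoidalCategory.associator_inv_naturality_right]
    slice_lhs 4 5 => rw [whisker_exchange]
    slice_lhs 5 6 => rw [whisker_exchange]
    slice_lhs 6 7 => rw [whisker_exchange]
    slice_lhs 7 8 => rw [whisker_exchange]
    slice_lhs 8 9 => rw [MonoidalCategory.associator_naturality_right]
    slice_lhs 9 10 => rw [← MonoidalCategory.whiskerLeft_comp, whisker_exchange,
      MonoidalCategory.whiskerLeft_comp]
    monoidal
  · unfold Counital
    rw [assoc, assoc, ← MonoidalCategory.whiskerLeft_comp, mul_counit]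
    simp only [MonoidalCategory.tensorHom_def, MonoidalCategory.whiskerLeft_comp, assoc]
    rw [← MonoidalCategory.associator_naturality_middle_assoc,
        ← comp_whiskerRight_assoc, comul_counit]
    monoidal
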